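/- Let n ≥ 1 and let F be the intermediate firing configuration with 2^n initial chips. For every x ≥ 0, if F(x,x) > 0 then F(x+1, x+1) ≤ F(x,x) - 2. -/
import Mathlib

section
variable {F : ℤ → ℤ → ℕ}

lemma symAux (hneg : ∀ x y : ℤ, x < 0 ∨ y < 0 → F x y = 0)
    (hrec : ∀ x y : ℤ, 0 ≤ x → 0 ≤ y → ¬(x = 0 ∧ y = 0) →
      F x y = F (x - 1) y / 2 + F x (y - 1) / 2) :
    ∀ s : ℕ, ∀ x y : ℤ, 0 ≤ x → 0 ≤ y → x + y = s → F x y = F y x := by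
  intro s
  induction s using Nat.strong_induction_on with
  | _ s ih =>
    intro x y hx hy hs
    by_cases h0 : x = 0 ∧ y = 0
    · rw [h0.1, h0.2]
    have hxy : ¬(y = 0 ∧ x = 0) := fun h => h0 ⟨h.2, h.1⟩
    rw [hrec x y hx hy h0, hrec y x hy hx hxy]
    have h1 : F (x-1) y = F y (x-1) := by
      rcases lt_or_ge (x-1) 0 with h | h
      · rw [hneg _ _ (Or.inl h), hneg _ _ (Or.inr h)]
      · exact ih (s-1) (by omega) _ _ h hy (by omega)
    have h2 : F x (y-1) = F (y-1) x := by
      rcases lt_or_ge (y-1) 0 with h | h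
      · rw [hneg _ _ (Or.inr h), hneg _ _ (Or.inl h)]
      · exact ih (s-1) (by omega) _ _ hx h (by omega)
    omega

lemma symF (hneg : ∀ x y : ℤ, x < 0 ∨ y < 0 → F x y = 0)
    (hrec : ∀ x y : ℤ, 0 ≤ x → 0 ≤ y → ¬(x = 0 ∧ y = 0) →
      F x y = F (x - 1) y / 2 + F x (y - 1) / 2) :
    ∀ x y : ℤ, F x y = F y x := by
  intro x y
  rcases lt_or_ge x 0 with h | hx
  · rw [hneg _ _ (Or.inl h), hneg _ _ (Or.inr h)]
  rcases lt_or_ge y 0 with h | hy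
  · rw [hneg _ _ (Or.inr h), hneg _ _ (Or.inl h)]
  exact symAux hneg hrec (x+y).toNat x y hx hy (by omega)

lemma monoAux (hneg : ∀ x y : ℤ, x < 0 ∨ y < 0 → F x y = 0)
    (hrec : ∀ x y : ℤ, 0 ≤ x → 0 ≤ y → ¬(x = 0 ∧ y = 0) →
      F x y = F (x - 1) y / 2 + F x (y - 1) / 2) :
    ∀ s : ℕ, ∀ x y : ℤ, 0 ≤ x → x ≤ y → x + y = s → F (x-1) (y+1) ≤ F x y := by
  intro s
  induction s using Nat.strong_induction_on with
  | _ s ih =>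
    intro x y hx hxy hs
    rcases lt_or_ge (x-1) 0 with h | hx1
    · rw [hneg _ _ (Or.inl h)]; exact Nat.zero_le _
    have hy : 0 ≤ y := le_trans hx hxy
    have e1 : F (x-1) (y+1) = F (x-2) (y+1) / 2 + F (x-1) y / 2 := by
      have h := hrec (x-1) (y+1) hx1 (by omega) (by omega)
      rw [show x-1-1 = x-2 by ring, show y+1-1 = y by ring] at h
      exact h
    have e2 : F x y = F (x-1) y / 2 + F x (y-1) / 2 :=
      hrec x y hx hy (by omega)
    have m1 : F (x-2) (y+1) ≤ F (x-1) y := by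
      have h := ih (s-1) (by omega) (x-1) y (by omega) (by omega) (by omega)
      rwa [show x-1-1 = x-2 by ring] at h
    have key : F (x-2) (y+1) ≤ F x (y-1) := by
      rcases eq_or_lt_of_le hxy with heq | hlt
      · have hsym : F x (y-1) = F (x-1) y := by
          rw [← heq]
          exact symF hneg hrec x (x-1)
        omega
      · have m2 : F (x-1) y ≤ F x (y-1) := by
          have h := ih (s-1) (by omega) x (y-1) hx (by omega) (by omega)
          rwa [show y-1+1 = y by ring] at h
        omega
    have d : F (x-2) (y+1) / 2 ≤ F x (y-1) / 2 := Nat.div_le_div_right key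
    omega

lemma monoF (hneg : ∀ x y : ℤ, x < 0 ∨ y < 0 → F x y = 0)
    (hrec : ∀ x y : ℤ, 0 ≤ x → 0 ≤ y → ¬(x = 0 ∧ y = 0) →
      F x y = F (x - 1) y / 2 + F x (y - 1) / 2) :
    ∀ x y : ℤ, 0 ≤ x → x ≤ y → F (x-1) (y+1) ≤ F x y := fun x y hx hxy =>
  monoAux hneg hrec (x+y).toNat x y hx hxy (by omega)

lemma evenF {n : ℕ} (hn : 1 ≤ n)
    (hneg : ∀ x y : ℤ, x < 0 ∨ y < 0 → F x y = 0)
    (hzero : F 0 0 = 2 ^ n)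
    (hrec : ∀ x y : ℤ, 0 ≤ x → 0 ≤ y → ¬(x = 0 ∧ y = 0) →
      F x y = F (x - 1) y / 2 + F x (y - 1) / 2) :
    ∀ x : ℤ, 0 ≤ x → 2 ∣ F x x := by
  intro x hx
  rcases eq_or_lt_of_le hx with h | h
  · rw [← h, hzero]
    exact dvd_pow_self 2 (by omega)
  · have e := hrec x x hx hx (by omega)
    have hsym : F x (x-1) = F (x-1) x := symF hneg hrec x (x-1)
    rw [e, hsym]
    exact ⟨F (x-1) x / 2, by omega⟩

lemma keyAux {n : ℕ} (hn : 1 ≤ n)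
    (hneg : ∀ x y : ℤ, x < 0 ∨ y < 0 → F x y = 0)
    (hzero : F 0 0 = 2 ^ n)
    (hrec : ∀ x y : ℤ, 0 ≤ x → 0 ≤ y → ¬(x = 0 ∧ y = 0) →
      F x y = F (x - 1) y / 2 + F x (y - 1) / 2) :
    ∀ s : ℕ, ∀ x y : ℤ, 0 ≤ x → x + y = s →
    ((x < y → 2 ≤ F x y → F (x-1) (y+1) + 2 ≤ F x y) ∧
     (x = y → 2 ≤ F x y → F (x-1) (y+1) + 1 ≤ F x y)) := by
  intro s
  induction s using Nat.strong_induction_on with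
  | _ s ih =>
    intro x y hx hs
    constructor
    · -- off-diagonal: gap at least 2
      intro hxy hF2
      rcases lt_or_ge (x-1) 0 with h | hx1
      · rw [hneg _ _ (Or.inl h)]; omega
      have hy : 0 ≤ y := by omega
      have e1 : F x y = F (x-1) y / 2 + F x (y-1) / 2 :=
        hrec x y hx hy (by omega)
      have e2 : F (x-1) (y+1) = F (x-2) (y+1) / 2 + F (x-1) y / 2 := by
        have h := hrec (x-1) (y+1) hx1 (by omega) (by omega)
        rwa [show x-1-1 = x-2 by ring, show y+1-1 = y by ring] at h
      have mCA : F (x-2) (y+1) ≤ F (x-1) y := by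
        have h := monoF hneg hrec (x-1) y (by omega) (by omega)
        rwa [show x-1-1 = x-2 by ring] at h
      have mAB : F (x-1) y ≤ F x (y-1) := by
        have h := monoF hneg hrec x (y-1) hx (by omega)
        rwa [show y-1+1 = y by ring] at h
      by_cases hA : F (x-1) y ≤ 1
      · omega
      by_cases hd : x = y - 1
      · -- just off the diagonal
        have hBdiag : F x (y-1) = F x x := by rw [show y - 1 = x by omega]
        have hBeven : 2 ∣ F x (y-1) := hBdiag ▸ evenF hn hneg hzero hrec x hx
        have d1 : F (x-1) (x+1) + 1 ≤ F x x :=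
          (ih (s-1) (by omega) x x hx (by omega)).2 rfl (by omega)
        have d1' : F (x-1) y + 1 ≤ F x (y-1) := by
          rwa [show (x:ℤ)+1 = y by omega, ← hBdiag] at d1
        have d2 : F (x-1-1) (y+1) + 2 ≤ F (x-1) y :=
          (ih (s-1) (by omega) (x-1) y hx1 (by omega)).1 (by omega) (by omega)
        rw [show x-1-1 = x-2 by ring] at d2
        omega
      · -- strictly inside
        have d1 : F (x-1) (y-1+1) + 2 ≤ F x (y-1) :=
          (ih (s-1) (by omega) x (y-1) hx (by omega)).1 (by omega) (by omega)
        rw [show y-1+1 = y by ring] at d1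
        have d2 : F (x-1-1) (y+1) + 2 ≤ F (x-1) y :=
          (ih (s-1) (by omega) (x-1) y hx1 (by omega)).1 (by omega) (by omega)
        rw [show x-1-1 = x-2 by ring] at d2
        omega
    · -- diagonal: strict
      intro hxy hF2
      subst hxy
      rcases eq_or_lt_of_le hx with h0 | h0
      · rw [hneg (x-1) (x+1) (Or.inl (by omega))]
        omega
      · have e0 : F x x = F (x-1) x / 2 + F x (x-1) / 2 :=
          hrec x x hx hx (by omega)
        have hsym : F x (x-1) = F (x-1) x := symF hneg hrec x (x-1)
        have e2 : F (x-1) (x+1) = F (x-2) (x+1) / 2 + F (x-1) x / 2 := by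
          have h := hrec (x-1) (x+1) (by omega) (by omega) (by omega)
          rwa [show x-1-1 = x-2 by ring, show x+1-1 = x by ring] at h
        have hA : 2 ≤ F (x-1) x := by omega
        have d : F (x-1-1) (x+1) + 2 ≤ F (x-1) x :=
          (ih (s-1) (by omega) (x-1) x (by omega) (by omega)).1 (by omega) hA
        rw [show x-1-1 = x-2 by ring] at d
        omega

end

theorem stmt7 (n : ℕ) (hn : 1 ≤ n) (F : ℤ → ℤ → ℕ)
    (hneg : ∀ x y : ℤ, x < 0 ∨ y < 0 → F x y = 0)
    (hzero : F 0 0 = 2 ^ n)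
    (hrec : ∀ x y : ℤ, 0 ≤ x → 0 ≤ y → ¬(x = 0 ∧ y = 0) →
      F x y = F (x - 1) y / 2 + F x (y - 1) / 2) :
    ∀ x : ℤ, 0 ≤ x → 0 < F x x → F (x + 1) (x + 1) + 2 ≤ F x x := by
  intro x hx hpos
  have heven : 2 ∣ F x x := evenF hn hneg hzero hrec x hx
  have hF2 : 2 ≤ F x x := by omega
  have e1 : F (x+1) (x+1) = F x (x+1) / 2 + F (x+1) x / 2 := by
    have h := hrec (x+1) (x+1) (by omega) (by omega) (by omega)
    rwa [show x+1-1 = x by ring] at h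
  have hsym : F (x+1) x = F x (x+1) := symF hneg hrec (x+1) x
  have e2 : F x (x+1) = F (x-1) (x+1) / 2 + F x x / 2 := by
    have h := hrec x (x+1) hx (by omega) (by omega)
    rwa [show x+1-1 = x by ring] at h
  have d : F (x-1) (x+1) + 1 ≤ F x x :=
    (keyAux hn hneg hzero hrec (x+x).toNat x x hx (by omega)).2 rfl hF2
  omega
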